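/- Let N ⊆ ℝⁿ be a set, V ⊆ N a box, σ a unit pixel with θ(σ) ≠ 0 and centroid m_σ ∈ N, and r ∈ {1, 2, 3}; assume ψ_r(l_i) ≤ ψ_r(u_i) for all i, so that Ψ_r(V) is a box. If the pixel weight of σ with respect to V = ∏_i [l_i, u_i] satisfies w̄_V(σ) = m_σ^i − l_i for some coordinate i, then the pixel weight of σ with respect to the rounded box satisfies w̄_{Ψ_r(V)}(σ) = m_σ^i − ψ_r(l_i); and if w̄_V(σ) = u_i − m_σ^i for some i, then w̄_{Ψ_r(V)}(σ) = ψ_r(u_i) − m_σ^i. -/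

import Mathlib

open scoped Classical

noncomputable section

namespace BoxFiltration

variable {n : ℕ}

/-- `(l, u)` determines a box `∏ i, [l i, u i]` when `l i ≤ u i` for all `i`. -/
def IsBox (l u : Fin n → ℝ) : Prop := ∀ i, l i ≤ u i

/-- The set of points of the box `∏ i, [l i, u i]`. -/
def boxSet (l u : Fin n → ℝ) : Set (Fin n → ℝ) := {x | ∀ i, l i ≤ x i ∧ x i ≤ u i}

/-- Total width `|V| = ∑ i, (u i - l i)`. -/
def width (l u : Fin n → ℝ) : ℝ := ∑ i, (u i - l i)

/-- Box containment: the box `(l, u)` is contained in the box `(L, U)`. -/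
def BoxLE (l u L U : Fin n → ℝ) : Prop := ∀ i, L i ≤ l i ∧ u i ≤ U i

/-- Open π-neighborhood `B(V, π) = ∏ i, (l i - π, u i + π)`. -/
def nbhd (l u : Fin n → ℝ) (π : ℝ) : Set (Fin n → ℝ) :=
  {x | ∀ i, l i - π < x i ∧ x i < u i + π}

/-- Weight of a point `x` w.r.t. the box `(l, u)`:
`w_V(x) = min {0, min_i (x i - l i), min_i (u i - x i)}`. -/
def weight (l u x : Fin n → ℝ) : ℝ :=
  min 0 (sInf (Set.range fun i => min (x i - l i) (u i - x i)))

/-- Point-cover cost `C_α(V, N) = -α ∑_{x ∈ N} w_V(x) + (1 - α)|V|`. -/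
def cost (α : ℝ) (l u : Fin n → ℝ) (N : Finset (Fin n → ℝ)) : ℝ :=
  -α * ∑ x ∈ N, weight l u x + (1 - α) * width l u

/-- Neighborhood point set `N = X ∩ B(V, π)`. -/
def nbhdPts (X : Finset (Fin n → ℝ)) (l u : Fin n → ℝ) (π : ℝ) : Finset (Fin n → ℝ) :=
  X.filter (fun x => x ∈ nbhd l u π)

/-- `(l', u') ∈ sol_α(V, N)`: `(l', u')` is a box containing `V = (l, u)` of minimal cost. -/
def OptSol (α : ℝ) (l u : Fin n → ℝ) (N : Finset (Fin n → ℝ)) (l' u' : Fin n → ℝ) : Prop :=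
  IsBox l' u' ∧ BoxLE l u l' u' ∧
    ∀ l'' u'', IsBox l'' u'' → BoxLE l u l'' u'' → cost α l' u' N ≤ cost α l'' u'' N

/-- A largest optimal solution contains every optimal solution. -/
def LargestOptSol (α : ℝ) (l u : Fin n → ℝ) (N : Finset (Fin n → ℝ)) (l' u' : Fin n → ℝ) :
    Prop :=
  OptSol α l u N l' u' ∧ ∀ l'' u'', OptSol α l u N l'' u'' → BoxLE l'' u'' l' u'

end BoxFiltration

namespace BoxFiltration

variable {n : ℕ}

/-- The unit pixel containing `x`: the pixel with integer base point `fun i => ⌊x i⌋`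
(pixels are taken half-open, so each point lies in exactly one pixel). -/
def pixelOf (x : Fin n → ℝ) : Fin n → ℤ := fun i => ⌊x i⌋

/-- The (half-open) unit pixel with base point `k : Fin n → ℤ`. -/
def pixelSet (k : Fin n → ℤ) : Set (Fin n → ℝ) :=
  {x | ∀ i, (k i : ℝ) ≤ x i ∧ x i < (k i : ℝ) + 1}

/-- The closed unit pixel (cube) with base point `k`. -/
def closedPixelSet (k : Fin n → ℤ) : Set (Fin n → ℝ) :=
  {x | ∀ i, (k i : ℝ) ≤ x i ∧ x i ≤ (k i : ℝ) + 1}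

/-- The centroid `m_σ` of the unit pixel with base point `k`. -/
def centroid (k : Fin n → ℤ) : Fin n → ℝ := fun i => (k i : ℝ) + 1 / 2

/-- `θ(σ)`: the number of points of `X` in the unit pixel with base point `k`. -/
def theta (X : Finset (Fin n → ℝ)) (k : Fin n → ℤ) : ℕ :=
  (X.filter fun x => pixelOf x = k).card

/-- `Θ(N)`: the pixels `σ` with `m_σ ∈ N` and `θ(σ) ≠ 0`. -/
def Theta (X : Finset (Fin n → ℝ)) (N : Set (Fin n → ℝ)) : Finset (Fin n → ℤ) :=
  (X.image pixelOf).filter fun k => centroid k ∈ N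

/-- Pixel weight of a pixel with centroid `m` w.r.t. the box `(l, u)`:
`w̄_V(σ) = min {1/2, min_i (m i - l i), min_i (u i - m i)}`. -/
def pweight (l u m : Fin n → ℝ) : ℝ :=
  min (1 / 2) (sInf (Set.range fun i => min (m i - l i) (u i - m i)))

/-- Pixel cost `C̄_α(V, N) = -α ∑_{σ ∈ Θ(N)} θ(σ) w̄_V(σ) + (1 - α)|V|`. -/
def pcost (α : ℝ) (l u : Fin n → ℝ) (X : Finset (Fin n → ℝ)) (N : Set (Fin n → ℝ)) : ℝ :=
  -α * ∑ k ∈ Theta X N, (theta X k : ℝ) * pweight l u (centroid k) +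
    (1 - α) * width l u

/-- `(l', u') ∈ s̄ol_α(V, N)`: pixel-optimal solution for input box `V = (l, u)`. -/
def POptSol (α : ℝ) (l u : Fin n → ℝ) (X : Finset (Fin n → ℝ)) (N : Set (Fin n → ℝ))
    (l' u' : Fin n → ℝ) : Prop :=
  IsBox l' u' ∧ BoxLE l u l' u' ∧
    ∀ l'' u'', IsBox l'' u'' → BoxLE l u l'' u'' →
      pcost α l' u' X N ≤ pcost α l'' u'' X N

/-- A largest pixel-optimal solution contains every pixel-optimal solution. -/
def LargestPOptSol (α : ℝ) (l u : Fin n → ℝ) (X : Finset (Fin n → ℝ))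
    (N : Set (Fin n → ℝ)) (l' u' : Fin n → ℝ) : Prop :=
  POptSol α l u X N l' u' ∧ ∀ l'' u'', POptSol α l u X N l'' u'' → BoxLE l'' u'' l' u'

/-- Rounding `ψ_r` applied to a lower endpoint, for `r = 1, 2, 3`. -/
def psil : ℕ → ℝ → ℝ
  | 1 => fun t => (⌈t⌉ : ℝ)
  | 2 => fun t =>
      if 1 / 2 < Int.fract t then (⌈t⌉ : ℝ)
      else if 0 < Int.fract t then (⌊t⌋ : ℝ) + 1 / 2
      else t
  | _ => fun t => if 1 / 2 < Int.fract t then (⌈t⌉ : ℝ) else (⌊t⌋ : ℝ)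

/-- Rounding `ψ_r` applied to an upper endpoint, for `r = 1, 2, 3`. -/
def psiu : ℕ → ℝ → ℝ
  | 1 => fun t => (⌊t⌋ : ℝ)
  | 2 => fun t => if 1 / 2 ≤ Int.fract t then (⌊t⌋ : ℝ) + 1 / 2 else (⌊t⌋ : ℝ)
  | _ => fun t => if 1 / 2 ≤ Int.fract t then (⌈t⌉ : ℝ) else (⌊t⌋ : ℝ)

end BoxFiltration


namespace BoxFiltration

lemma ceil_of_fract_pos {t : ℝ} (h : 0 < Int.fract t) : (⌈t⌉ : ℤ) = ⌊t⌋ + 1 := by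
  have h1 : Int.fract t < 1 := Int.fract_lt_one t
  have h2 : Int.fract t = t - ⌊t⌋ := Int.self_sub_floor t |>.symm
  rw [Int.ceil_eq_iff]
  constructor <;> push_cast <;> linarith

lemma idl1 (k : ℤ) (t : ℝ) :
    ((k:ℝ)+1/2) - psil 1 t = (⌊(((k:ℝ)+1/2) - t) - 1/2⌋ : ℝ) + 1/2 := by
  have h : (((k:ℝ)+1/2) - t) - 1/2 = (k:ℝ) + (-t) := by ring
  rw [h, Int.floor_intCast_add, Int.floor_neg]
  simp [psil]; push_cast; ring

lemma idu1 (k : ℤ) (t : ℝ) :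
    psiu 1 t - ((k:ℝ)+1/2) = (⌊(t - ((k:ℝ)+1/2)) - 1/2⌋ : ℝ) + 1/2 := by
  have h : (t - ((k:ℝ)+1/2)) - 1/2 = t + ((-(k+1) : ℤ) : ℝ) := by push_cast; ring
  rw [h, Int.floor_add_intCast]
  simp [psiu]; push_cast; ring

lemma idl3 (k : ℤ) (t : ℝ) :
    ((k:ℝ)+1/2) - psil 3 t = (⌊((k:ℝ)+1/2) - t⌋ : ℝ) + 1/2 := by
  have h1 : Int.fract t < 1 := Int.fract_lt_one t
  have h0 : 0 ≤ Int.fract t := Int.fract_nonneg t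
  have h2 : Int.fract t = t - ⌊t⌋ := Int.self_sub_floor t |>.symm
  by_cases h : 1/2 < Int.fract t
  · have hc := ceil_of_fract_pos (lt_trans (by norm_num) h)
    have hfl : ⌊((k:ℝ)+1/2) - t⌋ = k - ⌊t⌋ - 1 := by
      rw [Int.floor_eq_iff]; constructor <;> push_cast <;> linarith
    rw [hfl]; simp only [psil]; rw [if_pos h]; push_cast [hc]; ring
  · have hfl : ⌊((k:ℝ)+1/2) - t⌋ = k - ⌊t⌋ := by
      rw [Int.floor_eq_iff]; push_cast at h ⊢; constructor <;> linarith
    rw [hfl]; simp only [psil]; rw [if_neg h]; push_cast; ring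

lemma idu3 (k : ℤ) (t : ℝ) :
    psiu 3 t - ((k:ℝ)+1/2) = (⌊t - ((k:ℝ)+1/2)⌋ : ℝ) + 1/2 := by
  have h1 : Int.fract t < 1 := Int.fract_lt_one t
  have h0 : 0 ≤ Int.fract t := Int.fract_nonneg t
  have h2 : Int.fract t = t - ⌊t⌋ := Int.self_sub_floor t |>.symm
  by_cases h : 1/2 ≤ Int.fract t
  · have hc := ceil_of_fract_pos (lt_of_lt_of_le (by norm_num) h)
    have hfl : ⌊t - ((k:ℝ)+1/2)⌋ = ⌊t⌋ - k := by
      rw [Int.floor_eq_iff]; constructor <;> push_cast <;> linarith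
    rw [hfl]; simp only [psiu]; rw [if_pos h]; push_cast [hc]; ring
  · have hfl : ⌊t - ((k:ℝ)+1/2)⌋ = ⌊t⌋ - k - 1 := by
      rw [Int.floor_eq_iff]; push_cast at h ⊢; constructor <;> linarith
    rw [hfl]; simp only [psiu]; rw [if_neg h]; push_cast; ring

lemma idl2 (k : ℤ) (t : ℝ) :
    ((k:ℝ)+1/2) - psil 2 t = (⌊2*(((k:ℝ)+1/2) - t)⌋ : ℝ)/2 := by
  have h1 : Int.fract t < 1 := Int.fract_lt_one t
  have h0 : 0 ≤ Int.fract t := Int.fract_nonneg t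
  have h2 : Int.fract t = t - ⌊t⌋ := Int.self_sub_floor t |>.symm
  by_cases h : 1/2 < Int.fract t
  · have hc := ceil_of_fract_pos (lt_trans (by norm_num) h)
    have hfl : ⌊2*(((k:ℝ)+1/2) - t)⌋ = 2*k - 1 - 2*⌊t⌋ := by
      rw [Int.floor_eq_iff]; constructor <;> push_cast <;> linarith
    rw [hfl]; simp only [psil]; rw [if_pos h]; push_cast [hc]; ring
  · by_cases h' : 0 < Int.fract t
    · have hfl : ⌊2*(((k:ℝ)+1/2) - t)⌋ = 2*k - 2*⌊t⌋ := by
        rw [Int.floor_eq_iff]; push_cast at h ⊢; constructor <;> linarith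
      rw [hfl]; simp only [psil]; rw [if_neg h, if_pos h']; push_cast; ring
    · have hz : Int.fract t = 0 := le_antisymm (not_lt.1 h') h0
      have ht : t = (⌊t⌋ : ℝ) := by rw [h2] at hz; linarith
      have hfl : ⌊2*(((k:ℝ)+1/2) - t)⌋ = 2*k + 1 - 2*⌊t⌋ := by
        rw [Int.floor_eq_iff]; constructor <;> push_cast <;> linarith [ht, Int.floor_intCast (R := ℝ) ⌊t⌋]
      rw [hfl]; simp only [psil]; rw [if_neg h, if_neg h']; push_cast; linarith [ht]

lemma idu2 (k : ℤ) (t : ℝ) :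
    psiu 2 t - ((k:ℝ)+1/2) = (⌊2*(t - ((k:ℝ)+1/2))⌋ : ℝ)/2 := by
  have h1 : Int.fract t < 1 := Int.fract_lt_one t
  have h0 : 0 ≤ Int.fract t := Int.fract_nonneg t
  have h2 : Int.fract t = t - ⌊t⌋ := Int.self_sub_floor t |>.symm
  by_cases h : 1/2 ≤ Int.fract t
  · have hfl : ⌊2*(t - ((k:ℝ)+1/2))⌋ = 2*⌊t⌋ - 2*k := by
      rw [Int.floor_eq_iff]; constructor <;> push_cast <;> linarith
    rw [hfl]; simp only [psiu]; rw [if_pos h]; push_cast; ring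
  · have hfl : ⌊2*(t - ((k:ℝ)+1/2))⌋ = 2*⌊t⌋ - 2*k - 1 := by
      rw [Int.floor_eq_iff]; push_cast at h ⊢; constructor <;> linarith
    rw [hfl]; simp only [psiu]; rw [if_neg h]; push_cast; ring


lemma pweight_combine {n : ℕ} (hn : 1 ≤ n) (m l u L U : Fin n → ℝ) (g : ℝ → ℝ)
    (hmono : Monotone g) (hhalf : g (1/2) ≤ 1/2)
    (hL : ∀ j, m j - L j = g (m j - l j)) (hU : ∀ j, U j - m j = g (u j - m j)) :
    (∀ i, pweight l u m = m i - l i → pweight L U m = m i - L i) ∧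
    (∀ i, pweight l u m = u i - m i → pweight L U m = U i - m i) := by
  have hne : Nonempty (Fin n) := ⟨⟨0, hn⟩⟩
  have hb : BddBelow (Set.range fun j => min (m j - l j) (u j - m j)) :=
    (Set.finite_range _).bddBelow
  have hb' : BddBelow (Set.range fun j => min (m j - L j) (U j - m j)) :=
    (Set.finite_range _).bddBelow
  have main : ∀ c : ℝ, c ≤ 1/2 → (∀ j, c ≤ min (m j - l j) (u j - m j)) →
      (∃ i, min (m i - L i) (U i - m i) ≤ g c) → pweight L U m = g c := by
    intro c hc hcf hex
    obtain ⟨i, hi⟩ := hex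
    have h1 : ∀ j, g c ≤ min (m j - L j) (U j - m j) := fun j =>
      le_min (by rw [hL j]; exact hmono ((hcf j).trans (min_le_left _ _)))
             (by rw [hU j]; exact hmono ((hcf j).trans (min_le_right _ _)))
    have h2 : sInf (Set.range fun j => min (m j - L j) (U j - m j)) = g c :=
      le_antisymm ((csInf_le hb' ⟨i, rfl⟩).trans hi)
        (le_csInf (Set.range_nonempty _) (by rintro x ⟨j, rfl⟩; exact h1 j))
    unfold pweight
    rw [h2]
    exact min_eq_right ((hmono hc).trans hhalf)
  constructor
  · intro i hi
    unfold pweight at hi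
    have hs1 : m i - l i ≤ 1/2 := by rw [← hi]; exact min_le_left _ _
    have hs2 : m i - l i ≤ sInf (Set.range fun j => min (m j - l j) (u j - m j)) := by
      rw [← hi]; exact min_le_right _ _
    have hall : ∀ j, m i - l i ≤ min (m j - l j) (u j - m j) := fun j =>
      hs2.trans (csInf_le hb ⟨j, rfl⟩)
    have := main _ hs1 hall ⟨i, (min_le_left _ _).trans (le_of_eq (hL i))⟩
    rw [this, hL i]
  · intro i hi
    unfold pweight at hi
    have hs1 : u i - m i ≤ 1/2 := by rw [← hi]; exact min_le_left _ _
    have hs2 : u i - m i ≤ sInf (Set.range fun j => min (m j - l j) (u j - m j)) := by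
      rw [← hi]; exact min_le_right _ _
    have hall : ∀ j, u i - m i ≤ min (m j - l j) (u j - m j) := fun j =>
      hs2.trans (csInf_le hb ⟨j, rfl⟩)
    have := main _ hs1 hall ⟨i, (min_le_right _ _).trans (le_of_eq (hU i))⟩
    rw [this, hU i]

lemma g1_mono : Monotone (fun t : ℝ => (⌊t - 1/2⌋ : ℝ) + 1/2) := by
  intro a b hab
  have := Int.floor_mono (show a - 1/2 ≤ b - 1/2 by linarith)
  simp only
  have : ((⌊a - 1/2⌋ : ℤ) : ℝ) ≤ ((⌊b - 1/2⌋ : ℤ) : ℝ) := Int.cast_le.mpr this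
  linarith

lemma g2_mono : Monotone (fun t : ℝ => (⌊2*t⌋ : ℝ)/2) := by
  intro a b hab
  have h := Int.floor_mono (show 2*a ≤ 2*b by linarith)
  have : ((⌊2*a⌋ : ℤ) : ℝ) ≤ ((⌊2*b⌋ : ℤ) : ℝ) := Int.cast_le.mpr h
  simp only
  linarith

lemma g3_mono : Monotone (fun t : ℝ => (⌊t⌋ : ℝ) + 1/2) := by
  intro a b hab
  have : ((⌊a⌋ : ℤ) : ℝ) ≤ ((⌊b⌋ : ℤ) : ℝ) := Int.cast_le.mpr (Int.floor_mono hab)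
  simp only
  linarith


end BoxFiltration


open BoxFiltration

/-- the coordinate determining the pixel weight of a pixel `σ` (with
`θ(σ) ≠ 0` and centroid in `N`) w.r.t. a box `V ⊆ N` still determines its pixel weight
w.r.t. each rounded box `Ψ_r(V)`, `r = 1, 2, 3`. -/
theorem pweight_rounding_direction
    (n : ℕ) (hn : 1 ≤ n) (X : Finset (Fin n → ℝ)) (N : Set (Fin n → ℝ))
    (l u : Fin n → ℝ) (hV : IsBox l u) (hVN : boxSet l u ⊆ N)
    (k : Fin n → ℤ) (hθ : theta X k ≠ 0) (hm : centroid k ∈ N)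
    (r : ℕ) (hr : r ∈ ({1, 2, 3} : Set ℕ))
    (hΨbox : ∀ i, psil r (l i) ≤ psiu r (u i)) :
    (∀ i, pweight l u (centroid k) = centroid k i - l i →
        pweight (fun j => psil r (l j)) (fun j => psiu r (u j)) (centroid k) =
          centroid k i - psil r (l i)) ∧
    (∀ i, pweight l u (centroid k) = u i - centroid k i →
        pweight (fun j => psil r (l j)) (fun j => psiu r (u j)) (centroid k) =
          psiu r (u i) - centroid k i) := by
  simp only [Set.mem_insert_iff, Set.mem_singleton_iff] at hr
  rcases hr with rfl | rfl | rfl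
  · exact pweight_combine hn (centroid k) l u _ _ (fun t => (⌊t - 1/2⌋ : ℝ) + 1/2)
      g1_mono (by norm_num) (fun j => idl1 (k j) (l j)) (fun j => idu1 (k j) (u j))
  · exact pweight_combine hn (centroid k) l u _ _ (fun t => (⌊2*t⌋ : ℝ)/2)
      g2_mono (by norm_num) (fun j => idl2 (k j) (l j)) (fun j => idu2 (k j) (u j))
  · exact pweight_combine hn (centroid k) l u _ _ (fun t => (⌊t⌋ : ℝ) + 1/2)
      g3_mono (by norm_num) (fun j => idl3 (k j) (l j)) (fun j => idu3 (k j) (u j))
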